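/- For every integer n ≥ 1, every t ≥ 0 and every Δ ≥ 0, 0 ≤ K(t+Δ, n) − K(t, n) ≤ m λ n Δ; that is, t ↦ K(t,n) is nondecreasing and Lipschitz continuous with Lipschitz constant at most mλn. -/

import Mathlib

open Finset MeasureTheory intervalIntegral Real Filter

noncomputable section

/-- The CDF `F(k) = ∑_{j=1}^k f(j)` of the bundle-size pmf `f`. -/
def cdfF (f : ℕ → ℝ) (k : ℕ) : ℝ := ∑ j ∈ Finset.Icc 1 k, f j

namespace Aux18

variable (f : ℕ → ℝ)

/-- `S n = ∑_{j=1}^n F j`. -/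
def SS (n : ℕ) : ℝ := ∑ j ∈ Finset.Icc 1 n, cdfF f j

/-- Events on a strip of length `n`: pairs `(k, p)`, window `[p, p+k-1] ⊆ [1,n]`. -/
def Ev (n : ℕ) : Finset (ℕ × ℕ) :=
  (Finset.Icc 1 n ×ˢ Finset.Icc 1 n).filter (fun e => e.1 + e.2 ≤ n + 1)

/-- windows of `e` and `w` intersect -/
def meets (e w : ℕ × ℕ) : Bool :=
  decide (e.2 < w.2 + w.1) && decide (w.2 < e.2 + e.1)

def chOK (e : ℕ × ℕ) (t : List (ℕ × ℕ)) : Bool := t.isEmpty || t.any (meets e)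

/-- Chains of length `r` of events on strip `n`; each element's window meets the
union of the windows of later elements. -/
def Ch : ℕ → ℕ → Finset (List (ℕ × ℕ))
  | 0, _ => {[]}
  | (r+1), n => ((Ev n ×ˢ Ch r n).filter (fun q => chOK q.1 q.2)).image (fun q => q.1 :: q.2)

/-- weight of a chain -/
def wt (l : List (ℕ × ℕ)) : ℝ :=
  (l.map (fun e => f e.1)).prod * (l.getLast?.elim 1 (fun e => (e.1 : ℝ)))

def Cc (r n : ℕ) : ℝ := ∑ l ∈ Ch r n, wt f l

def Mm : ℕ → ℕ → ℝ
  | 0, n => n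
  | (r+1), n => SS f n * Mm r n - 2 * ∑ j ∈ Finset.Icc 1 (n-1), cdfF f j * Mm r (n-j)

variable {f : ℕ → ℝ}

lemma cdfF_nonneg (hf : ∀ k, 0 ≤ f k) (k : ℕ) : 0 ≤ cdfF f k :=
  Finset.sum_nonneg fun j _ => hf j

lemma cdfF_mono (hf : ∀ k, 0 ≤ f k) {a b : ℕ} (h : a ≤ b) : cdfF f a ≤ cdfF f b :=
  Finset.sum_le_sum_of_subset_of_nonneg (Finset.Icc_subset_Icc_right h)
    (fun j _ _ => hf j)

lemma cdfF_eq_zero (hf : ∀ k, 0 ≤ f k) {n j : ℕ} (hn : cdfF f n = 0) (hj : j ≤ n) :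
    cdfF f j = 0 :=
  le_antisymm (hn ▸ cdfF_mono hf hj) (cdfF_nonneg hf j)

lemma SS_nonneg (hf : ∀ k, 0 ≤ f k) (n : ℕ) : 0 ≤ SS f n :=
  Finset.sum_nonneg fun j _ => cdfF_nonneg hf j

lemma SS_mono (hf : ∀ k, 0 ≤ f k) {a b : ℕ} (h : a ≤ b) : SS f a ≤ SS f b :=
  Finset.sum_le_sum_of_subset_of_nonneg (Finset.Icc_subset_Icc_right h)
    (fun j _ _ => cdfF_nonneg hf j)

lemma SS_succ (n : ℕ) : SS f (n+1) = SS f n + cdfF f (n+1) := by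
  unfold SS
  rw [Finset.sum_Icc_succ_top (by omega)]

lemma cdfF_le_SS (hf : ∀ k, 0 ≤ f k) {n : ℕ} (hn : 1 ≤ n) : cdfF f n ≤ SS f n := by
  unfold SS
  exact Finset.single_le_sum (f := fun j => cdfF f j)
    (fun j _ => cdfF_nonneg hf j) (Finset.mem_Icc.mpr ⟨hn, le_rfl⟩)

lemma SS_sub {i n : ℕ} (h : i ≤ n) :
    SS f n - SS f i = ∑ k ∈ Finset.Icc (i+1) n, cdfF f k := by
  have key : (∑ j ∈ Finset.Ioc 0 i, cdfF f j) + ∑ k ∈ Finset.Ioc i n, cdfF f k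
      = ∑ j ∈ Finset.Ioc 0 n, cdfF f j :=
    Finset.sum_Ioc_consecutive (fun j => cdfF f j) (Nat.zero_le i) h
  simp only [← Finset.Icc_add_one_left_eq_Ioc] at key
  unfold SS
  norm_num at key
  linarith

lemma denom_pos (hf : ∀ k, 0 ≤ f k) {i n : ℕ} (hFn : 0 < cdfF f n) (hi : i < n) :
    0 < ∑ k ∈ Finset.Icc (i+1) n, cdfF f k := by
  have h1 : cdfF f n ≤ ∑ k ∈ Finset.Icc (i+1) n, cdfF f k :=
    Finset.single_le_sum (f := fun k => cdfF f k)
      (fun k _ => cdfF_nonneg hf k) (Finset.mem_Icc.mpr ⟨hi, le_rfl⟩)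
  linarith

lemma mem_Ev {n : ℕ} {e : ℕ × ℕ} :
    e ∈ Ev n ↔ 1 ≤ e.1 ∧ 1 ≤ e.2 ∧ e.1 + e.2 ≤ n + 1 := by
  unfold Ev
  simp only [Finset.mem_filter, Finset.mem_product, Finset.mem_Icc]
  omega

lemma meets_iff {e w : ℕ × ℕ} :
    meets e w = true ↔ (e.2 < w.2 + w.1 ∧ w.2 < e.2 + e.1) := by
  simp [meets]

lemma Ev_zero : Ev 0 = ∅ := by
  ext e
  simp only [mem_Ev, Finset.notMem_empty, iff_false]
  omega

lemma mem_Ch_succ {r n : ℕ} {l : List (ℕ × ℕ)} :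
    l ∈ Ch (r+1) n ↔ ∃ e t, e ∈ Ev n ∧ t ∈ Ch r n ∧ chOK e t = true ∧ l = e :: t := by
  rw [show Ch (r+1) n = ((Ev n ×ˢ Ch r n).filter (fun q => chOK q.1 q.2)).image
      (fun q => q.1 :: q.2) from by rw [Ch], Finset.mem_image]
  constructor
  · rintro ⟨q, hq, rfl⟩
    rw [Finset.mem_filter, Finset.mem_product] at hq
    exact ⟨q.1, q.2, hq.1.1, hq.1.2, hq.2, rfl⟩
  · rintro ⟨e, t, he, ht, hok, rfl⟩
    refine ⟨(e, t), ?_, rfl⟩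
    rw [Finset.mem_filter, Finset.mem_product]
    exact ⟨⟨he, ht⟩, hok⟩

lemma mem_Ch_zero {n : ℕ} {l : List (ℕ × ℕ)} : l ∈ Ch 0 n ↔ l = [] := by
  rw [show Ch 0 n = {[]} from by rw [Ch]]
  simp

lemma Ch_length {r n : ℕ} {l : List (ℕ × ℕ)} (h : l ∈ Ch r n) : l.length = r := by
  induction r generalizing l with
  | zero => rw [mem_Ch_zero] at h; simp [h]
  | succ r ih =>
    obtain ⟨e, t, _, ht, _, rfl⟩ := mem_Ch_succ.mp h
    simp [ih ht]

lemma Ch_ne_nil {r n : ℕ} {l : List (ℕ × ℕ)} (hr : 1 ≤ r) (h : l ∈ Ch r n) : l ≠ [] := by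
  intro hnil
  have := Ch_length h
  rw [hnil] at this
  simp at this
  omega

lemma Ch_subset_Ev {r n : ℕ} {l : List (ℕ × ℕ)} (h : l ∈ Ch r n) :
    ∀ w ∈ l, w ∈ Ev n := by
  induction r generalizing l with
  | zero =>
    rw [mem_Ch_zero] at h
    subst h
    intro w hw
    simp at hw
  | succ r ih =>
    obtain ⟨e, t, he, ht, _, rfl⟩ := mem_Ch_succ.mp h
    intro w hw
    rcases List.mem_cons.mp hw with rfl | hw
    · exact he
    · exact ih ht w hw

lemma Ch_succ_zero {r : ℕ} : Ch (r+1) 0 = ∅ := by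
  ext l
  simp only [Finset.notMem_empty, iff_false, mem_Ch_succ]
  rintro ⟨e, t, he, -, -, -⟩
  simp [Ev_zero] at he

lemma Cc_strip_zero {r : ℕ} (hr : 1 ≤ r) : Cc f r 0 = 0 := by
  obtain ⟨r, rfl⟩ := Nat.exists_eq_add_of_le hr
  unfold Cc
  rw [show 1 + r = r + 1 by omega, Ch_succ_zero, Finset.sum_empty]

lemma wt_nonneg (hf : ∀ k, 0 ≤ f k) (l : List (ℕ × ℕ)) : 0 ≤ wt f l := by
  unfold wt
  apply mul_nonneg
  · apply List.prod_nonneg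
    intro x hx
    simp only [List.mem_map] at hx
    obtain ⟨e, _, rfl⟩ := hx
    exact hf e.1
  · cases l.getLast? with
    | none => simp
    | some e =>
      simp only [Option.elim]
      positivity

lemma Cc_nonneg (hf : ∀ k, 0 ≤ f k) (r n : ℕ) : 0 ≤ Cc f r n :=
  Finset.sum_nonneg fun l _ => wt_nonneg hf l

lemma wt_cons {e : ℕ × ℕ} {t : List (ℕ × ℕ)} (ht : t ≠ []) :
    wt f (e :: t) = f e.1 * wt f t := by
  unfold wt
  obtain ⟨a, t', rfl⟩ := List.exists_cons_of_ne_nil ht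
  simp [List.getLast?_cons_cons, mul_assoc]

/-! ### Summation over events -/

lemma EvSum {n : ℕ} (g : ℕ × ℕ → ℝ) :
    ∑ e ∈ Ev n, g e = ∑ k ∈ Finset.Icc 1 n, ∑ p ∈ Finset.Icc 1 (n+1-k), g (k, p) := by
  rw [← Finset.sum_sigma (Finset.Icc 1 n) (fun k => Finset.Icc 1 (n+1-k))
    (fun x => g (x.1, x.2))]
  refine Finset.sum_nbij' (fun e => ⟨e.1, e.2⟩) (fun x => (x.1, x.2)) ?_ ?_ ?_ ?_ ?_
  · intro e he
    rw [mem_Ev] at he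
    simp only [Finset.mem_sigma, Finset.mem_Icc]
    omega
  · intro x hx
    obtain ⟨k, p⟩ := x
    simp only [Finset.mem_sigma, Finset.mem_Icc] at hx
    rw [mem_Ev]
    simp only []
    omega
  · intro e _; rfl
  · intro x _; rfl
  · intro e _; rfl

lemma triangle_swap (g : ℕ → ℕ → ℝ) (n : ℕ) :
    ∑ k ∈ Finset.Icc 1 n, ∑ i ∈ Finset.range (n+1-k), g k i
      = ∑ i ∈ Finset.range n, ∑ k ∈ Finset.Icc 1 (n-i), g k i := by
  refine Finset.sum_comm' ?_
  intro k i
  simp only [Finset.mem_Icc, Finset.mem_range]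
  omega

lemma inner_to_range {N : ℕ} (g : ℕ → ℝ) :
    ∑ p ∈ Finset.Icc 1 N, g p = ∑ i ∈ Finset.range N, g (1+i) := by
  rw [← Finset.Ico_add_one_right_eq_Icc, Finset.sum_Ico_eq_sum_range]
  simp

lemma SS_eq_range (n : ℕ) : SS f n = ∑ i ∈ Finset.range n, cdfF f (n-i) := by
  rw [SS, inner_to_range (fun j => cdfF f j)]
  rw [← Finset.sum_range_reflect]
  refine Finset.sum_congr rfl fun i hi => ?_
  rw [Finset.mem_range] at hi
  congr 1
  omega

/-- reindexing `j = n - i` for functions vanishing at `0`. -/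
lemma range_to_Icc (C : ℕ → ℝ) (hC0 : C 0 = 0) (n : ℕ) :
    ∑ i ∈ Finset.range n, cdfF f (n-i) * C i
      = ∑ j ∈ Finset.Icc 1 (n-1), cdfF f j * C (n-j) := by
  cases n with
  | zero => simp
  | succ N =>
    rw [Finset.sum_range_succ']
    have h0 : cdfF f (N+1-0) * C 0 = 0 := by rw [hC0, mul_zero]
    rw [h0, add_zero]
    rw [inner_to_range (fun j => cdfF f j * C (N+1-j))]
    rw [← Finset.sum_range_reflect (fun i => cdfF f (1+i) * C (N+1-(1+i)))]
    simp only [Nat.succ_sub_one]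
    refine Finset.sum_congr rfl fun i hi => ?_
    rw [Finset.mem_range] at hi
    congr 2
    · omega
    · omega

lemma gauss_win (n N : ℕ) :
    ∑ i ∈ Finset.range N, ((n:ℝ) - 2*i) = N * ((n:ℝ) + 1 - N) := by
  induction N with
  | zero => simp
  | succ N ih =>
    rw [Finset.sum_range_succ, ih]
    push_cast
    ring

/-- `∑_{e ∈ Ev n} f k(e) = S_n`. -/
lemma sumA (n : ℕ) : ∑ e ∈ Ev n, f e.1 = SS f n := by
  rw [EvSum (fun e => f e.1)]
  have h1 : ∀ k, ∑ p ∈ Finset.Icc 1 (n+1-k), f k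
      = ∑ i ∈ Finset.range (n+1-k), f k := fun k => inner_to_range (fun _ => f k)
  simp only [h1]
  rw [triangle_swap (fun k _ => f k), SS_eq_range]
  refine Finset.sum_congr rfl fun i _ => ?_
  rfl

/-- `∑_{e ∈ Ev n} f k(e) · k(e) = n S_n − 2 ∑_j F_j (n−j)`. -/
lemma sumB (n : ℕ) :
    ∑ e ∈ Ev n, f e.1 * e.1
      = (n:ℝ) * SS f n - 2 * ∑ j ∈ Finset.Icc 1 (n-1), cdfF f j * ((n-j:ℕ):ℝ) := by
  have key : ∑ e ∈ Ev n, f e.1 * e.1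
      = ∑ i ∈ Finset.range n, ((n:ℝ) - 2*i) * cdfF f (n-i) := by
    rw [EvSum (fun e => f e.1 * e.1)]
    have h1 : ∀ k ∈ Finset.Icc 1 n, ∑ p ∈ Finset.Icc 1 (n+1-k), f k * k
        = ∑ i ∈ Finset.range (n+1-k), ((n:ℝ) - 2*i) * f k := by
      intro k hk
      rw [Finset.mem_Icc] at hk
      rw [inner_to_range (fun _ => f k * (k:ℝ)), Finset.sum_const, Finset.card_range,
        nsmul_eq_mul, ← Finset.sum_mul, gauss_win]
      have hc : ((n+1-k:ℕ):ℝ) = (n:ℝ) + 1 - k := by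
        have h : k ≤ n + 1 := by omega
        push_cast [Nat.cast_sub h]
        ring
      rw [hc]
      ring
    rw [Finset.sum_congr rfl h1, triangle_swap (fun k i => ((n:ℝ) - 2*i) * f k)]
    refine Finset.sum_congr rfl fun i _ => ?_
    rw [← Finset.mul_sum]
    rfl
  rw [key]
  have h2 : ∑ j ∈ Finset.Icc 1 (n-1), cdfF f j * ((n-j:ℕ):ℝ)
      = ∑ i ∈ Finset.range n, cdfF f (n-i) * (i:ℝ) :=
    (range_to_Icc (fun i => (i:ℝ)) (by norm_num) n).symm
  rw [h2, SS_eq_range, Finset.mul_sum, Finset.mul_sum, ← Finset.sum_sub_distrib]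
  refine Finset.sum_congr rfl fun i _ => ?_
  ring

lemma sumD {r : ℕ} (hr : 1 ≤ r) (n : ℕ) :
    ∑ e ∈ Ev n, f e.1 * (Cc f r (e.2-1) + Cc f r (n+1-e.1-e.2))
      = 2 * ∑ j ∈ Finset.Icc 1 (n-1), cdfF f j * Cc f r (n-j) := by
  rw [EvSum (fun e => f e.1 * (Cc f r (e.2-1) + Cc f r (n+1-e.1-e.2)))]
  have h1 : ∀ k ∈ Finset.Icc 1 n,
      ∑ p ∈ Finset.Icc 1 (n+1-k), f k * (Cc f r (p-1) + Cc f r (n+1-k-p))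
        = ∑ i ∈ Finset.range (n+1-k), 2 * f k * Cc f r i := by
    intro k hk
    rw [Finset.mem_Icc] at hk
    rw [inner_to_range (fun p => f k * (Cc f r (p-1) + Cc f r (n+1-k-p)))]
    have e1 : ∀ i, f k * (Cc f r (1+i-1) + Cc f r (n+1-k-(1+i)))
        = f k * Cc f r i + f k * Cc f r (n-k-i) := by
      intro i
      rw [show 1+i-1 = i by omega, show n+1-k-(1+i) = n-k-i by omega]
      ring
    simp only [e1]
    rw [Finset.sum_add_distrib]
    have e2 : ∑ i ∈ Finset.range (n+1-k), f k * Cc f r (n-k-i)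
        = ∑ i ∈ Finset.range (n+1-k), f k * Cc f r i := by
      rw [← Finset.sum_range_reflect (fun i => f k * Cc f r i)]
      refine Finset.sum_congr rfl fun i hi => ?_
      rw [Finset.mem_range] at hi
      congr 2
      omega
    rw [e2, ← Finset.sum_add_distrib]
    refine Finset.sum_congr rfl fun i _ => by ring
  rw [Finset.sum_congr rfl h1, triangle_swap (fun k i => 2 * f k * Cc f r i)]
  have h2 : 2 * ∑ j ∈ Finset.Icc 1 (n-1), cdfF f j * Cc f r (n-j)
      = 2 * ∑ i ∈ Finset.range n, cdfF f (n-i) * Cc f r i := by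
    rw [range_to_Icc (fun i => Cc f r i) (Cc_strip_zero hr) n]
  rw [h2, Finset.mul_sum]
  refine Finset.sum_congr rfl fun i _ => ?_
  have : ∑ k ∈ Finset.Icc 1 (n-i), 2 * f k * Cc f r i
      = 2 * (∑ k ∈ Finset.Icc 1 (n-i), f k) * Cc f r i := by
    rw [Finset.mul_sum, Finset.sum_mul]
  rw [this]
  have : (∑ k ∈ Finset.Icc 1 (n-i), f k) = cdfF f (n-i) := rfl
  rw [this]
  ring

lemma Ch_one {n : ℕ} : Ch 1 n = (Ev n).image (fun e => [e]) := by
  ext l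
  rw [mem_Ch_succ, Finset.mem_image]
  constructor
  · rintro ⟨e, t, he, ht, -, rfl⟩
    rw [mem_Ch_zero] at ht
    subst ht
    exact ⟨e, he, rfl⟩
  · rintro ⟨e, he, rfl⟩
    exact ⟨e, [], he, mem_Ch_zero.mpr rfl, rfl, rfl⟩

lemma wt_singleton {e : ℕ × ℕ} : wt f [e] = f e.1 * e.1 := by
  unfold wt
  simp

lemma Cc_one (n : ℕ) : Cc f 1 n = ∑ e ∈ Ev n, f e.1 * e.1 := by
  unfold Cc
  rw [Ch_one, Finset.sum_image (fun a _ b _ h => by injection h)]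
  exact Finset.sum_congr rfl fun e _ => wt_singleton

lemma Mm_one (n : ℕ) : Mm f 1 n = Cc f 1 n := by
  rw [Cc_one, sumB]
  simp only [Mm]
  ring

/-! ### Splitting chains that avoid a window -/

lemma not_meets {e w : ℕ × ℕ} :
    meets e w = false ↔ (w.2 + w.1 ≤ e.2 ∨ e.2 + e.1 ≤ w.2) := by
  rw [← Bool.not_eq_true, meets_iff]
  omega

/-- A chain avoiding the window of `e` lies entirely to its left or entirely to
its right (connectivity of chains). -/
lemma dichotomy {n : ℕ} {e : ℕ × ℕ} :
    ∀ {r : ℕ} {t : List (ℕ × ℕ)}, t ∈ Ch r n → (∀ w ∈ t, meets e w = false) →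
      (∀ w ∈ t, w.2 + w.1 ≤ e.2) ∨ (∀ w ∈ t, e.2 + e.1 ≤ w.2) := by
  intro r
  induction r with
  | zero =>
    intro t ht _
    rw [mem_Ch_zero] at ht
    subst ht
    left
    intro w hw
    simp at hw
  | succ r ih =>
    intro t ht havoid
    obtain ⟨w₀, t', hw₀, ht', hok, rfl⟩ := mem_Ch_succ.mp ht
    have hav' : ∀ w ∈ t', meets e w = false := fun w hw => havoid w (List.mem_cons_of_mem _ hw)
    have h₀ : meets e w₀ = false := havoid w₀ (List.mem_cons_self)
    rw [not_meets] at h₀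
    rcases t' with _ | ⟨a, t''⟩
    · -- singleton
      rcases h₀ with h | h
      · left
        intro w hw
        rcases List.mem_cons.mp hw with rfl | hw'
        · exact h
        · simp at hw'
      · right
        intro w hw
        rcases List.mem_cons.mp hw with rfl | hw'
        · exact h
        · simp at hw'
    · -- nonempty tail
      have hany : (a :: t'').any (meets w₀) = true := by
        unfold chOK at hok
        simpa using hok
      obtain ⟨w', hw'mem, hmw⟩ := List.any_eq_true.mp hany
      rw [meets_iff] at hmw
      rcases ih ht' hav' with hL | hR
      · left
        intro w hw
        rcases List.mem_cons.mp hw with rfl | hw2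
        · have h1 := hL w' hw'mem
          omega
        · exact hL w hw2
      · right
        intro w hw
        rcases List.mem_cons.mp hw with rfl | hw2
        · have h1 := hR w' hw'mem
          omega
        · exact hR w hw2

/-- restriction of chains to a left substrip -/
lemma chainRestrict {a n : ℕ} (han : a ≤ n) :
    ∀ {r : ℕ} {t : List (ℕ × ℕ)},
      t ∈ Ch r a ↔ (t ∈ Ch r n ∧ ∀ w ∈ t, w.1 + w.2 ≤ a + 1) := by
  intro r
  induction r with
  | zero =>
    intro t
    rw [mem_Ch_zero, mem_Ch_zero]
    constructor
    · rintro rfl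
      exact ⟨rfl, by simp⟩
    · rintro ⟨rfl, -⟩
      rfl
  | succ r ih =>
    intro t
    rw [mem_Ch_succ, mem_Ch_succ]
    constructor
    · rintro ⟨e, t', he, ht', hok, rfl⟩
      have he' : e ∈ Ev n := by
        rw [mem_Ev] at he ⊢
        omega
      obtain ⟨ht'n, hbd⟩ := ih.mp ht'
      refine ⟨⟨e, t', he', ht'n, hok, rfl⟩, ?_⟩
      intro w hw
      rcases List.mem_cons.mp hw with rfl | hw'
      · rw [mem_Ev] at he
        omega
      · exact hbd w hw'
    · rintro ⟨⟨e, t', he, ht', hok, rfl⟩, hbd⟩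
      have he' : e ∈ Ev a := by
        rw [mem_Ev] at he ⊢
        have := hbd e (List.mem_cons_self)
        omega
      refine ⟨e, t', he', ?_, hok, rfl⟩
      exact ih.mpr ⟨ht', fun w hw => hbd w (List.mem_cons_of_mem _ hw)⟩

def shiftW (c : ℕ) (w : ℕ × ℕ) : ℕ × ℕ := (w.1, w.2 + c)

lemma meets_shift {c : ℕ} {e w : ℕ × ℕ} :
    meets (shiftW c e) (shiftW c w) = meets e w := by
  rw [Bool.eq_iff_iff, meets_iff, meets_iff]
  unfold shiftW
  simp only []
  omega

lemma any_shift {c : ℕ} {e : ℕ × ℕ} :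
    ∀ (t : List (ℕ × ℕ)), (t.map (shiftW c)).any (meets (shiftW c e)) = t.any (meets e) := by
  intro t
  induction t with
  | nil => rfl
  | cons w t ih => simp only [List.map_cons, List.any_cons, meets_shift, ih]

lemma chOK_shift {c : ℕ} {e : ℕ × ℕ} {t : List (ℕ × ℕ)} :
    chOK (shiftW c e) (t.map (shiftW c)) = chOK e t := by
  unfold chOK
  rw [any_shift]
  congr 1
  cases t <;> rfl

lemma Ch_shift {c n : ℕ} (hcn : c ≤ n) :
    ∀ {r : ℕ} {t : List (ℕ × ℕ)}, t ∈ Ch r (n - c) →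
      t.map (shiftW c) ∈ Ch r n ∧ ∀ w ∈ t.map (shiftW c), c + 1 ≤ w.2 := by
  intro r
  induction r with
  | zero =>
    intro t ht
    rw [mem_Ch_zero] at ht
    subst ht
    exact ⟨mem_Ch_zero.mpr rfl, by simp⟩
  | succ r ih =>
    intro t ht
    obtain ⟨e, t', he, ht', hok, rfl⟩ := mem_Ch_succ.mp ht
    obtain ⟨ht'n, hbd⟩ := ih ht'
    have he' : shiftW c e ∈ Ev n := by
      rw [mem_Ev] at he ⊢
      unfold shiftW
      simp only []
      omega
    constructor
    · rw [List.map_cons]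
      exact mem_Ch_succ.mpr ⟨shiftW c e, t'.map (shiftW c), he', ht'n,
        by rw [chOK_shift]; exact hok, rfl⟩
    · intro w hw
      rw [List.map_cons, List.mem_cons] at hw
      rcases hw with rfl | hw
      · unfold shiftW
        rw [mem_Ev] at he
        simp only []
        omega
      · exact hbd w hw

lemma Ch_unshift {c n : ℕ} (hcn : c ≤ n) :
    ∀ {r : ℕ} {t : List (ℕ × ℕ)}, t ∈ Ch r n → (∀ w ∈ t, c + 1 ≤ w.2) →
      ∃ s ∈ Ch r (n - c), s.map (shiftW c) = t := by
  intro r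
  induction r with
  | zero =>
    intro t ht _
    rw [mem_Ch_zero] at ht
    subst ht
    exact ⟨[], mem_Ch_zero.mpr rfl, rfl⟩
  | succ r ih =>
    intro t ht hbd
    obtain ⟨e, t', he, ht', hok, rfl⟩ := mem_Ch_succ.mp ht
    obtain ⟨s', hs', hmap⟩ := ih ht' (fun w hw => hbd w (List.mem_cons_of_mem _ hw))
    have hc1 : c + 1 ≤ e.2 := hbd e (List.mem_cons_self)
    refine ⟨(e.1, e.2 - c) :: s', ?_, ?_⟩
    · refine mem_Ch_succ.mpr ⟨(e.1, e.2 - c), s', ?_, hs', ?_, rfl⟩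
      · rw [mem_Ev] at he ⊢
        dsimp only
        omega
      · have hsh : shiftW c (e.1, e.2 - c) = e := by
          unfold shiftW
          dsimp only
          rw [Prod.ext_iff]
          dsimp only
          exact ⟨rfl, by omega⟩
        rw [← chOK_shift (c := c), hsh, hmap]
        exact hok
    · rw [List.map_cons, hmap]
      congr 1
      unfold shiftW
      dsimp only
      rw [Prod.ext_iff]
      dsimp only
      exact ⟨rfl, by omega⟩

lemma wt_map_shift {c : ℕ} {t : List (ℕ × ℕ)} : wt f (t.map (shiftW c)) = wt f t := by
  unfold wt
  rw [List.map_map]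
  have h1 : (fun e => f e.1) ∘ shiftW c = fun (e : ℕ × ℕ) => f e.1 := rfl
  rw [h1, List.getLast?_map]
  congr 1
  cases t.getLast? with
  | none => rfl
  | some w => rfl

lemma avoidSplit {r n : ℕ} (hr : 1 ≤ r) {e : ℕ × ℕ} (he : e ∈ Ev n) :
    ∑ t ∈ (Ch r n).filter (fun t => chOK e t = false), wt f t
      = Cc f r (e.2 - 1) + Cc f r (n + 1 - e.1 - e.2) := by
  classical
  rw [mem_Ev] at he
  set A := (Ch r n).filter (fun t => ∀ w ∈ t, w.1 + w.2 ≤ e.2) with hAdef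
  set B := (Ch r n).filter (fun t => ∀ w ∈ t, e.1 + e.2 ≤ w.2) with hBdef
  have hsplit : (Ch r n).filter (fun t => chOK e t = false) = A ∪ B := by
    ext t
    rw [hAdef, hBdef, Finset.mem_union, Finset.mem_filter, Finset.mem_filter,
      Finset.mem_filter]
    constructor
    · rintro ⟨htch, hnot⟩
      have hne : t ≠ [] := Ch_ne_nil hr htch
      have hav : ∀ w ∈ t, meets e w = false := by
        unfold chOK at hnot
        rw [Bool.or_eq_false_iff] at hnot
        intro w hw
        simpa using List.any_eq_false.mp hnot.2 w hw
      rcases dichotomy htch hav with hL | hR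
      · exact Or.inl ⟨htch, fun w hw => by have := hL w hw; omega⟩
      · exact Or.inr ⟨htch, fun w hw => by have := hR w hw; omega⟩
    · intro hAB
      have htch : t ∈ Ch r n := by rcases hAB with ⟨h, -⟩ | ⟨h, -⟩ <;> exact h
      refine ⟨htch, ?_⟩
      have hne : t ≠ [] := Ch_ne_nil hr htch
      unfold chOK
      rw [Bool.or_eq_false_iff]
      constructor
      · simpa using hne
      · rw [List.any_eq_false]
        intro w hw
        rw [Bool.not_eq_true, not_meets]
        rcases hAB with ⟨-, hL⟩ | ⟨-, hR⟩
        · have := hL w hw; left; omega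
        · have := hR w hw; right; omega
  have hdisj : Disjoint A B := by
    rw [Finset.disjoint_left]
    intro t htA htB
    rw [hAdef, Finset.mem_filter] at htA
    rw [hBdef, Finset.mem_filter] at htB
    have hne : t ≠ [] := Ch_ne_nil hr htA.1
    obtain ⟨w, t', rfl⟩ := List.exists_cons_of_ne_nil hne
    have h1 := htA.2 w (List.mem_cons_self)
    have h2 := htB.2 w (List.mem_cons_self)
    omega
  rw [hsplit, Finset.sum_union hdisj]
  congr 1
  · -- left part
    have hAeq : A = Ch r (e.2 - 1) := by
      ext t
      rw [hAdef, Finset.mem_filter, chainRestrict (show e.2 - 1 ≤ n by omega)]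
      constructor
      · rintro ⟨h1, h2⟩
        exact ⟨h1, fun w hw => by have := h2 w hw; omega⟩
      · rintro ⟨h1, h2⟩
        exact ⟨h1, fun w hw => by have := h2 w hw; omega⟩
    rw [hAeq]
    rfl
  · -- right part
    set c := e.1 + e.2 - 1 with hcdef
    have hcn : c ≤ n := by omega
    have hBeq : B = (Ch r (n - c)).image (List.map (shiftW c)) := by
      ext t
      rw [hBdef, Finset.mem_filter, Finset.mem_image]
      constructor
      · rintro ⟨h1, h2⟩
        obtain ⟨s, hs, hmap⟩ := Ch_unshift hcn h1 (fun w hw => by have := h2 w hw; omega)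
        exact ⟨s, hs, hmap⟩
      · rintro ⟨s, hs, rfl⟩
        obtain ⟨h1, h2⟩ := Ch_shift hcn hs
        exact ⟨h1, fun w hw => by have := h2 w hw; omega⟩
    have hinj : Function.Injective (List.map (shiftW c)) := by
      apply List.map_injective_iff.mpr
      intro a b hab
      unfold shiftW at hab
      rw [Prod.ext_iff] at hab ⊢
      dsimp only at hab
      omega
    rw [hBeq, Finset.sum_image (fun a _ b _ h => hinj h)]
    have : ∀ s, wt f (s.map (shiftW c)) = wt f s := fun s => wt_map_shift
    rw [Finset.sum_congr rfl (fun s _ => this s)]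
    have : n - c = n + 1 - e.1 - e.2 := by omega
    rw [this]
    rfl

lemma Cc_succ {r : ℕ} (hr : 1 ≤ r) (n : ℕ) :
    Cc f (r+1) n
      = SS f n * Cc f r n - 2 * ∑ j ∈ Finset.Icc 1 (n-1), cdfF f j * Cc f r (n-j) := by
  classical
  have h1 : Cc f (r+1) n
      = ∑ q ∈ (Ev n ×ˢ Ch r n).filter (fun q => chOK q.1 q.2 = true),
          f q.1.1 * wt f q.2 := by
    unfold Cc
    rw [show Ch (r+1) n = ((Ev n ×ˢ Ch r n).filter (fun q => chOK q.1 q.2)).image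
        (fun q => q.1 :: q.2) from by rw [Ch]]
    rw [Finset.sum_image (fun a _ b _ h => by
      rw [Prod.ext_iff]
      exact ⟨(List.cons.injEq _ _ _ _ ▸ h).1, (List.cons.injEq _ _ _ _ ▸ h).2⟩)]
    refine Finset.sum_congr rfl fun q hq => ?_
    rw [Finset.mem_filter, Finset.mem_product] at hq
    exact wt_cons (Ch_ne_nil hr hq.1.2)
  have h2 : ∑ q ∈ (Ev n ×ˢ Ch r n), f q.1.1 * wt f q.2 = SS f n * Cc f r n := by
    rw [Finset.sum_product]
    have : ∀ e : ℕ × ℕ, ∑ t ∈ Ch r n, f e.1 * wt f t = f e.1 * Cc f r n :=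
      fun e => by rw [← Finset.mul_sum]; rfl
    rw [Finset.sum_congr rfl (fun e _ => this e), ← Finset.sum_mul, sumA]
  have h3 : ∑ q ∈ (Ev n ×ˢ Ch r n).filter (fun q => ¬ (chOK q.1 q.2 = true)),
      f q.1.1 * wt f q.2 = 2 * ∑ j ∈ Finset.Icc 1 (n-1), cdfF f j * Cc f r (n-j) := by
    rw [Finset.sum_filter, Finset.sum_product]
    have hinner : ∀ e ∈ Ev n,
        (∑ t ∈ Ch r n, if ¬ (chOK e t = true) then f e.1 * wt f t else 0)
          = f e.1 * (Cc f r (e.2 - 1) + Cc f r (n + 1 - e.1 - e.2)) := by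
      intro e he
      rw [← avoidSplit hr he, Finset.sum_filter, Finset.mul_sum]
      refine Finset.sum_congr rfl fun t _ => ?_
      by_cases h : chOK e t = true
      · simp [h]
      · rw [Bool.not_eq_true] at h
        simp [h]
    rw [Finset.sum_congr rfl hinner, sumD hr]
  have hsum := Finset.sum_filter_add_sum_filter_not (Ev n ×ˢ Ch r n)
    (fun q => chOK q.1 q.2 = true) (fun q => f q.1.1 * wt f q.2)
  rw [h1]
  rw [h3] at hsum
  rw [h2] at hsum
  linarith

lemma Mm_eq_Cc {r : ℕ} (hr : 1 ≤ r) (n : ℕ) : Mm f r n = Cc f r n := by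
  induction r generalizing n with
  | zero => omega
  | succ r ih =>
    rcases Nat.eq_zero_or_pos r with rfl | hrpos
    · exact Mm_one n
    · have : Mm f (r+1) n = SS f n * Mm f r n
          - 2 * ∑ j ∈ Finset.Icc 1 (n-1), cdfF f j * Mm f r (n-j) := by
        simp only [Mm]
      rw [this, ih hrpos n, Cc_succ hrpos n]
      congr 1
      rw [Finset.mul_sum, Finset.mul_sum]
      refine Finset.sum_congr rfl fun j _ => ?_
      rw [ih hrpos (n-j)]

lemma Mm_nonneg (hf : ∀ k, 0 ≤ f k) (r n : ℕ) : 0 ≤ Mm f r n := by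
  rcases Nat.eq_zero_or_pos r with rfl | hr
  · show (0:ℝ) ≤ (n:ℝ)
    positivity
  · rw [Mm_eq_Cc hr n]
    exact Cc_nonneg hf r n

section Gamma

variable {γ : ℕ → ℕ → ℝ}

lemma rowSum (hf : ∀ k, 0 ≤ f k)
    (hγ_zero : ∀ n j : ℕ, cdfF f n = 0 → 1 ≤ j → j ≤ n → γ n j = 1)
    (hγ_diag : ∀ n : ℕ, 0 < cdfF f n →
      γ n n = (n : ℝ) - ∑ i ∈ Finset.Icc 1 (n - 1), γ n i)
    (n : ℕ) : ∑ i ∈ Finset.Icc 1 n, γ n i = n := by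
  rcases eq_or_lt_of_le (cdfF_nonneg hf n) with h0 | hpos
  · have h1 : ∀ i ∈ Finset.Icc 1 n, γ n i = 1 := by
      intro i hi
      rw [Finset.mem_Icc] at hi
      exact hγ_zero n i h0.symm hi.1 hi.2
    rw [Finset.sum_congr rfl h1, Finset.sum_const, Nat.card_Icc]
    simp
  · rcases Nat.eq_zero_or_pos n with rfl | hn
    · exfalso
      have : cdfF f 0 = 0 := by
        unfold cdfF
        simp
      rw [this] at hpos
      exact lt_irrefl 0 hpos
    obtain ⟨n', rfl⟩ : ∃ n', n = n' + 1 := ⟨n - 1, by omega⟩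
    rw [Finset.sum_Icc_succ_top (by omega : 1 ≤ n' + 1), hγ_diag (n'+1) hpos]
    have : n' + 1 - 1 = n' := by omega
    rw [this]
    ring

lemma Mm_eq_gamma (hf : ∀ k, 0 ≤ f k)
    (hγ_zero : ∀ n j : ℕ, cdfF f n = 0 → 1 ≤ j → j ≤ n → γ n j = 1)
    (hγ_rec : ∀ n i : ℕ, 0 < cdfF f n → 1 ≤ i → i < n →
      γ n i = 2 * (∑ j ∈ Finset.Icc 1 (n - i), cdfF f j * γ (n - j) i) /
        (∑ k ∈ Finset.Icc (i + 1) n, cdfF f k))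
    (hγ_diag : ∀ n : ℕ, 0 < cdfF f n →
      γ n n = (n : ℝ) - ∑ i ∈ Finset.Icc 1 (n - 1), γ n i)
    (r : ℕ) : ∀ n, Mm f r n = ∑ i ∈ Finset.Icc 1 n, γ n i * (SS f i)^r := by
  induction r with
  | zero =>
    intro n
    simp only [Mm, pow_zero, mul_one]
    exact (rowSum hf hγ_zero hγ_diag n).symm
  | succ r ih =>
    intro n
    rcases eq_or_lt_of_le (cdfF_nonneg hf n) with h0 | hpos
    · -- degenerate case F n = 0
      have hS : ∀ i, i ≤ n → SS f i = 0 := by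
        intro i hi
        refine Finset.sum_eq_zero fun j hj => ?_
        rw [Finset.mem_Icc] at hj
        exact cdfF_eq_zero hf h0.symm (by omega)
      have hL : Mm f (r+1) n = 0 := by
        simp only [Mm]
        rw [hS n le_rfl, zero_mul]
        have : ∑ j ∈ Finset.Icc 1 (n-1), cdfF f j * Mm f r (n-j) = 0 := by
          refine Finset.sum_eq_zero fun j hj => ?_
          rw [Finset.mem_Icc] at hj
          rw [cdfF_eq_zero hf h0.symm (by omega), zero_mul]
        rw [this]
        ring
      have hR : ∑ i ∈ Finset.Icc 1 n, γ n i * (SS f i)^(r+1) = 0 := by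
        refine Finset.sum_eq_zero fun i hi => ?_
        rw [Finset.mem_Icc] at hi
        rw [hS i hi.2, zero_pow (by omega), mul_zero]
      rw [hL, hR]
    · -- main case
      rcases Nat.eq_zero_or_pos n with rfl | hn
      · exfalso
        have : cdfF f 0 = 0 := by
          unfold cdfF
          simp
        rw [this] at hpos
        exact lt_irrefl 0 hpos
      obtain ⟨n', rfl⟩ : ∃ n', n = n' + 1 := ⟨n - 1, by omega⟩
      set n := n' + 1 with hndef
      have hsplit : ∀ i ∈ Finset.Icc 1 n, γ n i * (SS f i)^(r+1)
          = γ n i * (SS f i)^r * SS f n - γ n i * (SS f i)^r * (SS f n - SS f i) := by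
        intro i _
        ring
      rw [Finset.sum_congr rfl hsplit, Finset.sum_sub_distrib]
      have hfirst : ∑ i ∈ Finset.Icc 1 n, γ n i * (SS f i)^r * SS f n
          = SS f n * Mm f r n := by
        rw [← Finset.sum_mul, ← ih n, mul_comm]
      have hsecond : ∑ i ∈ Finset.Icc 1 n, γ n i * (SS f i)^r * (SS f n - SS f i)
          = 2 * ∑ j ∈ Finset.Icc 1 (n-1), cdfF f j * Mm f r (n-j) := by
        rw [Finset.sum_Icc_succ_top (by omega : 1 ≤ n), sub_self, mul_zero, add_zero]
        have hterm : ∀ i ∈ Finset.Icc 1 n', γ n i * (SS f i)^r * (SS f n - SS f i)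
            = ∑ j ∈ Finset.Icc 1 (n-i), (SS f i)^r * (2 * (cdfF f j * γ (n-j) i)) := by
          intro i hi
          rw [Finset.mem_Icc] at hi
          have hin : i < n := by omega
          have hD : γ n i * (∑ k ∈ Finset.Icc (i+1) n, cdfF f k)
              = 2 * (∑ j ∈ Finset.Icc 1 (n - i), cdfF f j * γ (n - j) i) := by
            rw [hγ_rec n i hpos hi.1 hin]
            exact div_mul_cancel₀ _ (denom_pos hf hpos hin).ne'
          rw [SS_sub (le_of_lt hin)]
          calc γ n i * (SS f i)^r * (∑ k ∈ Finset.Icc (i+1) n, cdfF f k)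
              = (SS f i)^r * (γ n i * ∑ k ∈ Finset.Icc (i+1) n, cdfF f k) := by ring
            _ = (SS f i)^r * (2 * ∑ j ∈ Finset.Icc 1 (n-i), cdfF f j * γ (n-j) i) := by
                rw [hD]
            _ = ∑ j ∈ Finset.Icc 1 (n-i), (SS f i)^r * (2 * (cdfF f j * γ (n-j) i)) := by
                rw [Finset.mul_sum, Finset.mul_sum]
        rw [Finset.sum_congr rfl hterm]
        have hswap : ∑ i ∈ Finset.Icc 1 n', ∑ j ∈ Finset.Icc 1 (n-i),
            (SS f i)^r * (2 * (cdfF f j * γ (n-j) i))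
            = ∑ j ∈ Finset.Icc 1 n', ∑ i ∈ Finset.Icc 1 (n-j),
              (SS f i)^r * (2 * (cdfF f j * γ (n-j) i)) := by
          refine Finset.sum_comm' ?_
          intro i j
          simp only [Finset.mem_Icc]
          omega
        rw [hswap]
        have : n - 1 = n' := by omega
        rw [this]
        rw [Finset.mul_sum]
        refine Finset.sum_congr rfl fun j hj => ?_
        rw [Finset.mem_Icc] at hj
        rw [ih (n-j), Finset.mul_sum, Finset.mul_sum]
        refine Finset.sum_congr rfl fun i _ => by ring
      rw [hfirst, hsecond]
      simp only [Mm]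

end Gamma

section Gamma2

variable {γ : ℕ → ℕ → ℝ}

lemma gamma_nonneg (hf : ∀ k, 0 ≤ f k)
    (hγ_zero : ∀ n j : ℕ, cdfF f n = 0 → 1 ≤ j → j ≤ n → γ n j = 1)
    (hγ_rec : ∀ n i : ℕ, 0 < cdfF f n → 1 ≤ i → i < n →
      γ n i = 2 * (∑ j ∈ Finset.Icc 1 (n - i), cdfF f j * γ (n - j) i) /
        (∑ k ∈ Finset.Icc (i + 1) n, cdfF f k))
    (hγ_diag : ∀ n : ℕ, 0 < cdfF f n →
      γ n n = (n : ℝ) - ∑ i ∈ Finset.Icc 1 (n - 1), γ n i) :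
    ∀ n i, 1 ≤ i → i ≤ n → 0 ≤ γ n i := by
  intro n
  induction n using Nat.strong_induction_on with
  | _ n IH =>
  intro i hi1 hin
  rcases eq_or_lt_of_le (cdfF_nonneg hf n) with h0 | hpos
  · rw [hγ_zero n i h0.symm hi1 hin]
    norm_num
  · have hoff : ∀ i, 1 ≤ i → i < n → 0 ≤ γ n i := by
      intro i hi1 hiltn
      rw [hγ_rec n i hpos hi1 hiltn]
      apply div_nonneg
      · have : 0 ≤ ∑ j ∈ Finset.Icc 1 (n - i), cdfF f j * γ (n - j) i := by
          refine Finset.sum_nonneg fun j hj => ?_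
          rw [Finset.mem_Icc] at hj
          exact mul_nonneg (cdfF_nonneg hf j)
            (IH (n - j) (by omega) i hi1 (by omega))
        linarith
      · exact (denom_pos hf hpos hiltn).le
    rcases eq_or_lt_of_le hin with rfl | hlt
    · -- diagonal case: i = n
      have hn1 : 1 ≤ i := hi1
      obtain ⟨n', rfl⟩ : ∃ n', i = n' + 1 := ⟨i - 1, by omega⟩
      set B := ∑ l ∈ Finset.Icc 1 n', γ (n'+1) l with hBdef
      have hB : 0 ≤ B := by
        refine Finset.sum_nonneg fun l hl => ?_
        rw [Finset.mem_Icc] at hl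
        exact hoff l hl.1 (by omega)
      have hSn : 0 < SS f (n'+1) := lt_of_lt_of_le hpos (cdfF_le_SS hf (by omega))
      have hqlt : SS f n' < SS f (n'+1) := by
        rw [SS_succ]
        have := cdfF_nonneg hf (n'+1)
        linarith
      set q := SS f n' / SS f (n'+1) with hqdef
      have hq0 : 0 ≤ q := div_nonneg (SS_nonneg hf n') hSn.le
      have hq1 : q < 1 := (div_lt_one hSn).mpr hqlt
      have key : ∀ r : ℕ, -(B * q^r) ≤ γ (n'+1) (n'+1) := by
        intro r
        have hM := Mm_nonneg hf r (n'+1)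
        rw [Mm_eq_gamma hf hγ_zero hγ_rec hγ_diag r (n'+1),
          Finset.sum_Icc_succ_top (by omega : 1 ≤ n'+1)] at hM
        have hbound : ∑ l ∈ Finset.Icc 1 n', γ (n'+1) l * (SS f l)^r
            ≤ B * (SS f n')^r := by
          rw [hBdef, Finset.sum_mul]
          refine Finset.sum_le_sum fun l hl => ?_
          rw [Finset.mem_Icc] at hl
          exact mul_le_mul_of_nonneg_left
            (pow_le_pow_left₀ (SS_nonneg hf l) (SS_mono hf hl.2) r)
            (hoff l hl.1 (by omega))
        have h2 : -(B * (SS f n')^r) ≤ γ (n'+1) (n'+1) * (SS f (n'+1))^r := by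
          linarith
        have h3 : 0 < (SS f (n'+1))^r := pow_pos hSn r
        rw [hqdef, div_pow]
        rw [show -(B * ((SS f n')^r / (SS f (n'+1))^r))
              = (-(B * (SS f n')^r)) / ((SS f (n'+1))^r) by ring]
        exact (div_le_iff₀ h3).mpr h2
      have hlim : Tendsto (fun r : ℕ => -(B * q^r)) atTop (nhds 0) := by
        have h4 := tendsto_pow_atTop_nhds_zero_of_lt_one hq0 hq1
        have h5 := h4.const_mul B
        rw [mul_zero] at h5
        simpa using h5.neg
      exact le_of_tendsto hlim (Filter.Eventually.of_forall key)
    · exact hoff i hi1 hlt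

end Gamma2

lemma cdfF_le_one {m : ℕ} (hf : ∀ k, 0 ≤ f k)
    (hf_sum : ∑ k ∈ Finset.Icc 1 m, f k = 1)
    (hf_supp : ∀ k : ℕ, k = 0 ∨ m < k → f k = 0) (j : ℕ) :
    cdfF f j ≤ 1 := by
  rcases le_or_gt j m with h | h
  · calc cdfF f j ≤ cdfF f m := cdfF_mono hf h
      _ = 1 := hf_sum
  · have hsplit : (∑ i ∈ Finset.Ioc 0 m, f i) + ∑ i ∈ Finset.Ioc m j, f i
        = ∑ i ∈ Finset.Ioc 0 j, f i :=
      Finset.sum_Ioc_consecutive _ (Nat.zero_le m) h.le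
    simp only [← Finset.Icc_add_one_left_eq_Ioc] at hsplit
    norm_num at hsplit
    have hz : ∑ i ∈ Finset.Icc (m+1) j, f i = 0 := by
      refine Finset.sum_eq_zero fun i hi => ?_
      rw [Finset.mem_Icc] at hi
      exact hf_supp i (Or.inr (by omega))
    unfold cdfF
    rw [← hsplit, hf_sum, hz]
    norm_num

lemma SS_le (hf : ∀ k, 0 ≤ f k) {m : ℕ}
    (hf_sum : ∑ k ∈ Finset.Icc 1 m, f k = 1)
    (hf_supp : ∀ k : ℕ, k = 0 ∨ m < k → f k = 0) (n : ℕ) :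
    SS f n ≤ n := by
  unfold SS
  calc ∑ j ∈ Finset.Icc 1 n, cdfF f j ≤ ∑ j ∈ Finset.Icc 1 n, 1 :=
        Finset.sum_le_sum fun j _ => cdfF_le_one hf hf_sum hf_supp j
    _ = n := by
        rw [Finset.sum_const, Nat.card_Icc]
        simp

lemma Mm_one_le {m : ℕ} (hf : ∀ k, 0 ≤ f k)
    (hf_sum : ∑ k ∈ Finset.Icc 1 m, f k = 1)
    (hf_supp : ∀ k : ℕ, k = 0 ∨ m < k → f k = 0) (n : ℕ) :
    Mm f 1 n ≤ (m : ℝ) * n := by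
  rw [Mm_one n, Cc_one n]
  have h1 : ∑ e ∈ Ev n, f e.1 * e.1 ≤ ∑ e ∈ Ev n, f e.1 * m := by
    refine Finset.sum_le_sum fun e _ => ?_
    rcases le_or_gt e.1 m with h | h
    · exact mul_le_mul_of_nonneg_left (by exact_mod_cast h) (hf e.1)
    · rw [hf_supp e.1 (Or.inr h)]
      norm_num
  have h2 : ∑ e ∈ Ev n, f e.1 * m = SS f n * m := by
    rw [← Finset.sum_mul, sumA]
  have h3 : SS f n * m ≤ (n : ℝ) * m := by
    have := SS_le hf hf_sum hf_supp n
    have hm0 : (0:ℝ) ≤ m := by positivity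
    nlinarith
  calc ∑ e ∈ Ev n, f e.1 * e.1 ≤ SS f n * m := h2 ▸ h1
    _ ≤ (n : ℝ) * m := h3
    _ = (m : ℝ) * n := by ring
end Aux18

/-- `R(t,n)`: the expected number of remaining packages at time `t` starting from `n`
packages on a line, given via its closed-form solution in terms of the constants `γ`. -/
def Rfun (f : ℕ → ℝ) (γ : ℕ → ℕ → ℝ) (lam t : ℝ) (n : ℕ) : ℝ :=
  if 0 < cdfF f n then
    ∑ i ∈ Finset.Icc 1 n, γ n i * Real.exp (-(lam * ∑ j ∈ Finset.Icc 1 i, cdfF f j) * t)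
  else (n : ℝ)

/-- `K(t,n) = n - R(t,n)`. -/
def Kfun (f : ℕ → ℝ) (γ : ℕ → ℕ → ℝ) (lam t : ℝ) (n : ℕ) : ℝ :=
  (n : ℝ) - Rfun f γ lam t n

open Aux18

/-- For every `n ≥ 1`, `t ≥ 0` and `Δ ≥ 0`,
`0 ≤ K(t+Δ,n) - K(t,n) ≤ m λ n Δ`: `t ↦ K(t,n)` is nondecreasing and Lipschitz with
constant at most `mλn`. -/
theorem stmt_18
    (m : ℕ) (hm : 1 ≤ m) (f : ℕ → ℝ)
    (hf_nonneg : ∀ k, 0 ≤ f k)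
    (hf_sum : ∑ k ∈ Finset.Icc 1 m, f k = 1)
    (hf_supp : ∀ k : ℕ, k = 0 ∨ m < k → f k = 0)
    (lam : ℝ) (hlam : 0 < lam)
    (γ : ℕ → ℕ → ℝ)
    (hγ_zero : ∀ n j : ℕ, cdfF f n = 0 → 1 ≤ j → j ≤ n → γ n j = 1)
    (hγ_rec : ∀ n i : ℕ, 0 < cdfF f n → 1 ≤ i → i < n →
      γ n i = 2 * (∑ j ∈ Finset.Icc 1 (n - i), cdfF f j * γ (n - j) i) /
        (∑ k ∈ Finset.Icc (i + 1) n, cdfF f k))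
    (hγ_diag : ∀ n : ℕ, 0 < cdfF f n →
      γ n n = (n : ℝ) - ∑ i ∈ Finset.Icc 1 (n - 1), γ n i)
    (n : ℕ) (hn : 1 ≤ n) (t : ℝ) (ht : 0 ≤ t) (Δ : ℝ) (hΔ : 0 ≤ Δ) :
    0 ≤ Kfun f γ lam (t + Δ) n - Kfun f γ lam t n
    ∧ Kfun f γ lam (t + Δ) n - Kfun f γ lam t n ≤ (m : ℝ) * lam * (n : ℝ) * Δ := by
  have hmn : (0:ℝ) ≤ (m : ℝ) * lam * (n : ℝ) * Δ := by positivity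
  have hRdiff : Kfun f γ lam (t + Δ) n - Kfun f γ lam t n
      = Rfun f γ lam t n - Rfun f γ lam (t + Δ) n := by
    unfold Kfun
    ring
  rcases eq_or_lt_of_le (cdfF_nonneg hf_nonneg n) with h0 | hpos
  · have hR : ∀ s : ℝ, Rfun f γ lam s n = n := by
      intro s
      unfold Rfun
      rw [if_neg]
      rw [← h0]
      exact lt_irrefl 0
    rw [hRdiff, hR, hR, sub_self]
    exact ⟨le_rfl, hmn⟩
  · have hγpos : ∀ i ∈ Finset.Icc 1 n, 0 ≤ γ n i := by
      intro i hi
      rw [Finset.mem_Icc] at hi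
      exact gamma_nonneg hf_nonneg hγ_zero hγ_rec hγ_diag n i hi.1 hi.2
    have hSnonneg : ∀ i : ℕ, 0 ≤ ∑ j ∈ Finset.Icc 1 i, cdfF f j :=
      fun i => SS_nonneg hf_nonneg i
    have hdiff : Kfun f γ lam (t + Δ) n - Kfun f γ lam t n
        = ∑ i ∈ Finset.Icc 1 n, γ n i *
            (Real.exp (-(lam * ∑ j ∈ Finset.Icc 1 i, cdfF f j) * t)
              - Real.exp (-(lam * ∑ j ∈ Finset.Icc 1 i, cdfF f j) * (t + Δ))) := by
      rw [hRdiff]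
      unfold Rfun
      rw [if_pos hpos, if_pos hpos, ← Finset.sum_sub_distrib]
      exact Finset.sum_congr rfl fun i _ => by ring
    constructor
    · rw [hdiff]
      refine Finset.sum_nonneg fun i hi => ?_
      refine mul_nonneg (hγpos i hi) ?_
      have hexp : Real.exp (-(lam * ∑ j ∈ Finset.Icc 1 i, cdfF f j) * (t + Δ))
          ≤ Real.exp (-(lam * ∑ j ∈ Finset.Icc 1 i, cdfF f j) * t) := by
        apply Real.exp_le_exp.mpr
        have h1 : 0 ≤ lam * ∑ j ∈ Finset.Icc 1 i, cdfF f j :=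
          mul_nonneg hlam.le (hSnonneg i)
        nlinarith
      linarith
    · rw [hdiff]
      have hterm : ∀ i ∈ Finset.Icc 1 n,
          γ n i * (Real.exp (-(lam * ∑ j ∈ Finset.Icc 1 i, cdfF f j) * t)
            - Real.exp (-(lam * ∑ j ∈ Finset.Icc 1 i, cdfF f j) * (t + Δ)))
          ≤ γ n i * ((lam * ∑ j ∈ Finset.Icc 1 i, cdfF f j) * Δ) := by
        intro i hi
        set a := lam * ∑ j ∈ Finset.Icc 1 i, cdfF f j with hadef
        have ha : 0 ≤ a := mul_nonneg hlam.le (hSnonneg i)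
        refine mul_le_mul_of_nonneg_left ?_ (hγpos i hi)
        have e1 : Real.exp (-a * (t + Δ)) = Real.exp (-a * t) * Real.exp (-a * Δ) := by
          rw [← Real.exp_add]
          congr 1
          ring
        have e2 : Real.exp (-a * t) ≤ 1 := by
          calc Real.exp (-a * t) ≤ Real.exp 0 := Real.exp_le_exp.mpr (by nlinarith)
            _ = 1 := Real.exp_zero
        have e3 : 1 - Real.exp (-a * Δ) ≤ a * Δ := by
          have h := Real.add_one_le_exp (-a * Δ)
          nlinarith
        have e5 : 0 ≤ 1 - Real.exp (-a * Δ) := by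
          have : Real.exp (-a * Δ) ≤ 1 := by
            calc Real.exp (-a * Δ) ≤ Real.exp 0 := Real.exp_le_exp.mpr (by nlinarith)
              _ = 1 := Real.exp_zero
          linarith
        calc Real.exp (-a * t) - Real.exp (-a * (t + Δ))
            = Real.exp (-a * t) * (1 - Real.exp (-a * Δ)) := by
              rw [e1]; ring
          _ ≤ 1 * (a * Δ) := mul_le_mul e2 e3 e5 zero_le_one
          _ = a * Δ := one_mul _
      have hsum := Finset.sum_le_sum hterm
      have hM : ∑ i ∈ Finset.Icc 1 n, γ n i *
          ((lam * ∑ j ∈ Finset.Icc 1 i, cdfF f j) * Δ)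
          = lam * Δ * Mm f 1 n := by
        rw [Mm_eq_gamma hf_nonneg hγ_zero hγ_rec hγ_diag 1 n, Finset.mul_sum]
        refine Finset.sum_congr rfl fun i _ => ?_
        have : SS f i = ∑ j ∈ Finset.Icc 1 i, cdfF f j := rfl
        rw [this, pow_one]
        ring
      have hMle : Mm f 1 n ≤ (m : ℝ) * n := Mm_one_le hf_nonneg hf_sum hf_supp n
      have hld : 0 ≤ lam * Δ := mul_nonneg hlam.le hΔ
      calc ∑ i ∈ Finset.Icc 1 n, γ n i *
            (Real.exp (-(lam * ∑ j ∈ Finset.Icc 1 i, cdfF f j) * t)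
              - Real.exp (-(lam * ∑ j ∈ Finset.Icc 1 i, cdfF f j) * (t + Δ)))
          ≤ lam * Δ * Mm f 1 n := by rw [← hM]; exact hsum
        _ ≤ lam * Δ * ((m : ℝ) * n) := mul_le_mul_of_nonneg_left hMle hld
        _ = (m : ℝ) * lam * (n : ℝ) * Δ := by ring
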